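/- Let ρ be a state on an M-fold tensor product Hilbert space, |n⟩ = |n₁⟩⊗⋯⊗|n_M⟩ a product pure state, and let Fᵢ = ⟨nᵢ| Trᵢᶜ(ρ) |nᵢ⟩ be the fidelity of the i-th single-mode reduced state of ρ with |nᵢ⟩. Define F̃ = 1 − ∑_{i=1}^M (1 − Fᵢ). Then 1 − M(1 − F(ρ,|n⟩)) ≤ F̃ ≤ F(ρ,|n⟩), where F(ρ,|n⟩) = ⟨n|ρ|n⟩. -/

import Mathlib

open scoped ComplexOrder

/-- robust fidelity bounds. For a density matrix `ρ` on `M` modes of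
dimension `d` (basis indexed by `Fin M → Fin d`) and a product basis state `|n⟩`, with
`Fᵢ = ⟨nᵢ|Tr_{ iᶜ}(ρ)|nᵢ⟩` the single-mode reduced fidelities and
`F̃ = 1 − ∑ᵢ (1 − Fᵢ)`, one has `1 − M(1 − F) ≤ F̃ ≤ F` where `F = ⟨n|ρ|n⟩`. -/
theorem robust_fidelity_bounds (M d : ℕ)
    (ρ : Matrix (Fin M → Fin d) (Fin M → Fin d) ℂ)
    (hpsd : ρ.PosSemidef) (htr : ρ.trace = 1) (n : Fin M → Fin d)
    (Fi : Fin M → ℝ)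
    (hFi : ∀ i, Fi i =
      (∑ f : Fin M → Fin d, if f i = n i then ρ f (Function.update f i (n i)) else 0).re) :
    1 - (M : ℝ) * (1 - (ρ n n).re) ≤ 1 - ∑ i, (1 - Fi i) ∧
      1 - ∑ i, (1 - Fi i) ≤ (ρ n n).re := by
  classical
  set p : (Fin M → Fin d) → ℝ := fun f => (ρ f f).re with hp
  have hp0 : ∀ f, 0 ≤ p f := by
    intro f
    have h' : 0 ≤ ρ f f := by
      exact hpsd.diag_nonneg
    have := (Complex.le_def.mp h').1
    simpa using this
  have hsum : ∑ f, p f = 1 := by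
    have h1 : (ρ.trace).re = 1 := by rw [htr]; simp
    have h2 : ρ.trace = ∑ f, ρ f f := rfl
    rw [h2, Complex.re_sum] at h1
    exact h1
  have hFi' : ∀ i, Fi i = ∑ f, if f i = n i then p f else 0 := by
    intro i
    rw [hFi i, Complex.re_sum]
    refine Finset.sum_congr rfl fun f _ => ?_
    by_cases h : f i = n i
    · simp only [h, if_true]
      congr 1
      rw [← h, Function.update_eq_self]
    · simp [h]
  set q : Fin M → ℝ := fun i => ∑ f, if f i = n i then 0 else p f with hq
  have hsplit : ∀ i, 1 - Fi i = q i := by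
    intro i
    rw [hFi' i, hq, ← hsum, ← Finset.sum_sub_distrib]
    refine Finset.sum_congr rfl fun f _ => ?_
    by_cases h : f i = n i <;> simp [h]
  have hrest : 1 - p n = ∑ f, if f = n then 0 else p f := by
    have hn : p n = ∑ f, if f = n then p f else 0 := by simp
    rw [← hsum, hn, ← Finset.sum_sub_distrib]
    refine Finset.sum_congr rfl fun f _ => ?_
    by_cases h : f = n <;> simp [h]
  have hqle : ∀ i, q i ≤ 1 - p n := by
    intro i
    rw [hrest]
    refine Finset.sum_le_sum fun f _ => ?_
    by_cases h : f i = n i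
    · simp only [h, if_true]
      by_cases h2 : f = n <;> simp [h2, hp0 f]
    · have h2 : f ≠ n := fun hfn => h (by rw [hfn])
      simp [h, h2]
  have hsum_eq : ∑ i, (1 - Fi i) = ∑ i, q i := Finset.sum_congr rfl fun i _ => hsplit i
  constructor
  · -- ∑ q i ≤ M * (1 - p n)
    rw [hsum_eq]
    have : ∑ i : Fin M, q i ≤ ∑ i : Fin M, (1 - p n) :=
      Finset.sum_le_sum fun i _ => hqle i
    simp only [Finset.sum_const, Finset.card_univ, Fintype.card_fin, nsmul_eq_mul] at this
    linarith
  · -- 1 - p n ≤ ∑ i, q i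
    rw [hsum_eq]
    have hswap : ∑ i : Fin M, q i = ∑ f, ∑ i : Fin M, if f i = n i then 0 else p f := by
      rw [Finset.sum_comm]
    rw [hswap]
    have : 1 - p n ≤ ∑ f, ∑ i : Fin M, (if f i = n i then 0 else p f) := by
      rw [hrest]
      refine Finset.sum_le_sum fun f _ => ?_
      by_cases h : f = n
      · simp only [h, if_true]
        exact Finset.sum_nonneg fun i _ => by by_cases h2 : n i = n i <;> simp [h2, hp0 n]
      · simp only [h, if_false]
        obtain ⟨j, hj⟩ := Function.ne_iff.mp h
        calc p f = if f j = n j then 0 else p f := by simp [hj]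
          _ ≤ ∑ i : Fin M, (if f i = n i then 0 else p f) :=
            Finset.single_le_sum (f := fun i => if f i = n i then 0 else p f)
              (fun i _ => by by_cases h2 : f i = n i <;> simp [h2, hp0 f])
              (Finset.mem_univ j)
    linarith
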